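/- Let A be a group acting by automorphisms on the finite group G and let K and L be distinct (A,sol)-components of G. Then K and L normalize each other and [K,L] ≤ Sol(K) ∩ Sol(L). -/

import Mathlib

open Pointwise
open scoped commutatorElement

/-- A subgroup `H` of `G` is *subnormal* if there is a finite chain
`H = c 0 ⊴ c 1 ⊴ ⋯ ⊴ c n = G` with each term normal in the next. -/
def IsSubnormal {G : Type*} [Group G] (H : Subgroup G) : Prop :=
  ∃ (n : ℕ) (c : ℕ → Subgroup G), c 0 = H ∧ c n = ⊤ ∧
    ∀ i < n, c i ≤ c (i + 1) ∧ ((c i).subgroupOf (c (i + 1))).Normal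

/-- A group is *quasisimple* if it is perfect and its quotient by its center is simple. -/
def IsQuasisimpleGroup (Q : Type*) [Group Q] : Prop :=
  commutator Q = ⊤ ∧ IsSimpleGroup (Q ⧸ Subgroup.center Q)

/-- A *component* of `G` is a quasisimple subnormal subgroup. -/
def IsComponent {G : Type*} [Group G] (K : Subgroup G) : Prop :=
  IsSubnormal K ∧ IsQuasisimpleGroup ↥K

/-- The *layer* `E(G)`: the subgroup generated by all components of `G`. -/
def layer (G : Type*) [Group G] : Subgroup G :=
  sSup {K : Subgroup G | IsComponent K}

/-- `Sol(G)`: the join of all solvable normal subgroups of `G`. -/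
def solRadical (G : Type*) [Group G] : Subgroup G :=
  sSup {N : Subgroup G | N.Normal ∧ IsSolvable ↥N}

instance solRadical_normal (G : Type*) [Group G] : (solRadical G).Normal := by
  constructor
  intro n hn g
  have h : solRadical G ≤ (solRadical G).comap (MulAut.conj g).toMonoidHom := by
    apply sSup_le
    intro N hN x hx
    have hmem : g * x * g⁻¹ ∈ N := hN.1.conj_mem x hx g
    exact Subgroup.mem_comap.mpr
      (le_sSup hN (by simpa [MulAut.conj_apply] using hmem))
  simpa [MulAut.conj_apply] using h hn

/-- A *sol-component* of `G` is a perfect subnormal subgroup of `G` whose image in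
`G/Sol(G)` is a component of `G/Sol(G)`. -/
def IsSolComponent {G : Type*} [Group G] (K : Subgroup G) : Prop :=
  IsSubnormal K ∧ commutator ↥K = ⊤ ∧
    IsComponent (K.map (QuotientGroup.mk' (solRadical G)))

/-- `E_sol(G)`: the subgroup generated by all sol-components of `G`. -/
def solLayer (G : Type*) [Group G] : Subgroup G :=
  sSup {K : Subgroup G | IsSolComponent K}

/-- `G` is *`A`-simple* (with `A` acting via `φ : A →* MulAut G`) if `G` is nonabelian
and the only `A`-invariant normal subgroups of `G` are `1` and `G`. -/
def IsMulASimple {A G : Type*} [Group A] [Group G] (φ : A →* MulAut G) : Prop :=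
  (¬ ∀ x y : G, Commute x y) ∧
    ∀ N : Subgroup G, N.Normal → (∀ a : A, φ a • N = N) → N = ⊥ ∨ N = ⊤

/-- The homomorphism `MulAut G →* MulAut (G ⧸ Z(G))` induced by passing to the
quotient by the center (which is characteristic). -/
def centerQuotHom (G : Type*) [Group G] :
    MulAut G →* MulAut (G ⧸ Subgroup.center G) where
  toFun e := QuotientGroup.congr (Subgroup.center G) (Subgroup.center G) e
      (Subgroup.characteristic_iff_map_eq.mp inferInstance e)
  map_one' := by
    ext x
    induction x using QuotientGroup.induction_on with
    | H x => rfl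
  map_mul' e f := by
    ext x
    induction x using QuotientGroup.induction_on with
    | H x => rfl

/-- `G` is *`A`-quasisimple* (with `A` acting via `φ`) if `G` is perfect and
`G/Z(G)` is `A`-simple with respect to the induced action. -/
def IsAQuasisimple {A G : Type*} [Group A] [Group G] (φ : A →* MulAut G) : Prop :=
  commutator G = ⊤ ∧ IsMulASimple ((centerQuotHom G).comp φ)

section AuxBasic

variable {G : Type*} [Group G]

/-- `N` is a normal subgroup of `M`, as subgroups of an ambient group. -/
def NormalIn {G : Type*} [Group G] (N M : Subgroup G) : Prop :=
  N ≤ M ∧ ∀ g ∈ M, ∀ x ∈ N, g * x * g⁻¹ ∈ N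

theorem normalIn_of_subgroupOf {N M : Subgroup G} (h : N ≤ M)
    (hn : (N.subgroupOf M).Normal) : NormalIn N M := by
  refine ⟨h, fun g hg x hx => ?_⟩
  have := hn.conj_mem ⟨x, h hx⟩ (by simpa [Subgroup.mem_subgroupOf] using hx) ⟨g, hg⟩
  simpa [Subgroup.mem_subgroupOf] using this

theorem subgroupOf_normal_of_normalIn {N M : Subgroup G} (h : NormalIn N M) :
    (N.subgroupOf M).Normal := by
  constructor
  rintro ⟨x, hxM⟩ hx ⟨g, hg⟩
  simp only [Subgroup.mem_subgroupOf] at hx ⊢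
  exact h.2 g hg x hx

theorem chain_mono {c : ℕ → Subgroup G} {n : ℕ}
    (hc : ∀ i < n, NormalIn (c i) (c (i + 1))) :
    ∀ i j, i ≤ j → j ≤ n → c i ≤ c j := by
  intro i j hij hjn
  induction j with
  | zero => simp [Nat.le_zero.mp hij]
  | succ j ih =>
    rcases Nat.eq_or_lt_of_le hij with h | h
    · simp [h]
    · exact (ih (by omega) (by omega)).trans (hc j (by omega)).1

theorem commutator_subgroup_eq_top_iff_self {K : Subgroup G} :
    commutator ↥K = ⊤ ↔ ⁅K, K⁆ = K := by
  have h1 : (⊤ : Subgroup ↥K).map K.subtype = K := by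
    rw [← MonoidHom.range_eq_map, K.range_subtype]
  constructor
  · intro h
    have := congrArg (Subgroup.map K.subtype) h
    rwa [commutator_def, Subgroup.map_commutator, h1] at this
  · intro h
    apply Subgroup.map_injective K.subtype_injective
    rw [commutator_def, Subgroup.map_commutator, h1, h]

theorem commElt_center_left {z a b : G} (hz : z ∈ Subgroup.center G) :
    ⁅a * z, b⁆ = ⁅a, b⁆ := by
  have h : z * b = b * z := (Subgroup.mem_center_iff.mp hz b).symm
  simp only [commutatorElement_def, mul_inv_rev]
  rw [mul_assoc a z b, h]
  group

theorem commElt_center_right {z a b : G} (hz : z ∈ Subgroup.center G) :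
    ⁅a, b * z⁆ = ⁅a, b⁆ := by
  have h : z * a⁻¹ = a⁻¹ * z := (Subgroup.mem_center_iff.mp hz a⁻¹).symm
  simp only [commutatorElement_def, mul_inv_rev]
  rw [← mul_assoc a b z, mul_assoc (a * b) z a⁻¹, h]
  group

end AuxBasic

section AuxComponent

variable {G : Type*} [Group G]

/-- Local copy of the quasisimple predicate (identical to `IsQuasisimpleGroup`). -/
theorem qs_ne_bot {K : Subgroup G}
    (h : commutator ↥K = ⊤ ∧ IsSimpleGroup (↥K ⧸ Subgroup.center ↥K)) : K ≠ ⊥ := by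
  rintro rfl
  haveI : Subsingleton ↥(⊥ : Subgroup G) :=
    ⟨fun a b => Subtype.ext (by simp [Subgroup.mem_bot.mp a.2, Subgroup.mem_bot.mp b.2])⟩
  haveI hsub : Subsingleton (↥(⊥ : Subgroup G) ⧸ Subgroup.center ↥(⊥ : Subgroup G)) :=
    (QuotientGroup.mk'_surjective _).subsingleton
  haveI := h.2.toNontrivial
  exact not_subsingleton _ hsub

/-- Quasisimple dichotomy: a normal subgroup of a quasisimple group is central or everything. -/
theorem lemD {L N : Subgroup G}
    (hqs : commutator ↥L = ⊤ ∧ IsSimpleGroup (↥L ⧸ Subgroup.center ↥L))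
    (hN : NormalIn N L) : L ≤ N ∨ ⁅L, N⁆ = ⊥ := by
  obtain ⟨hperf, hsimple⟩ := hqs
  have hNL : N ≤ L := hN.1
  haveI hnormal : (N.subgroupOf L).Normal := subgroupOf_normal_of_normalIn hN
  set Z := Subgroup.center ↥L with hZ
  have hmapnormal : ((N.subgroupOf L).map (QuotientGroup.mk' Z)).Normal :=
    Subgroup.Normal.map hnormal _ (QuotientGroup.mk'_surjective Z)
  rcases hmapnormal.eq_bot_or_eq_top with hbot | htop
  · right
    have hcen : N.subgroupOf L ≤ Z := by
      rw [Subgroup.map_eq_bot_iff, QuotientGroup.ker_mk'] at hbot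
      exact hbot
    rw [eq_bot_iff]
    rw [Subgroup.commutator_le]
    intro l hl n hn
    have hmem : (⟨n, hNL hn⟩ : ↥L) ∈ Z := hcen (by simpa [Subgroup.mem_subgroupOf] using hn)
    have hcomm : l * n = n * l := by
      have := (Subgroup.mem_center_iff.mp hmem) ⟨l, hl⟩
      simpa using congrArg Subtype.val this
    rw [Subgroup.mem_bot, commutatorElement_eq_one_iff_mul_comm]
    exact hcomm
  · left
    have key : ∀ x : ↥L, ∃ n ∈ N.subgroupOf L, n⁻¹ * x ∈ Z := by
      intro x
      have hx : QuotientGroup.mk' Z x ∈ (N.subgroupOf L).map (QuotientGroup.mk' Z) := by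
        rw [htop]; trivial
      obtain ⟨n, hn, heq⟩ := hx
      exact ⟨n, hn, QuotientGroup.eq.mp heq⟩
    have hcomle : commutator ↥L ≤ N.subgroupOf L := by
      rw [commutator_def, Subgroup.commutator_le]
      intro x _ y _
      obtain ⟨n, hn, hz1⟩ := key x
      obtain ⟨m, hm, hz2⟩ := key y
      have hx : x = n * (n⁻¹ * x) := by group
      have hy : y = m * (m⁻¹ * y) := by group
      rw [hx, hy, commElt_center_left hz1, commElt_center_right hz2]
      have hcm : ⁅n, m⁆ = n * (m * n⁻¹ * m⁻¹) := by
        rw [commutatorElement_def]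
        group
      rw [hcm]
      exact mul_mem hn (hnormal.conj_mem _ (inv_mem hn) m)
    rw [hperf] at hcomle
    intro x hx
    have : (⟨x, hx⟩ : ↥L) ∈ N.subgroupOf L := hcomle (Subgroup.mem_top _)
    simpa [Subgroup.mem_subgroupOf] using this

/-- A quasisimple subgroup subnormal in `M` is contained in, or commutes with,
any subgroup normal in `M`. -/
theorem lemA : ∀ (n : ℕ) (c : ℕ → Subgroup G) (L M N : Subgroup G),
    c 0 = L → c n = M → (∀ i < n, NormalIn (c i) (c (i + 1))) →
    (commutator ↥L = ⊤ ∧ IsSimpleGroup (↥L ⧸ Subgroup.center ↥L)) →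
    NormalIn N M → L ≤ N ∨ ⁅L, N⁆ = ⊥ := by
  intro n
  induction n with
  | zero =>
    intro c L M N h0 hn hc hqs hN
    have hLM : L = M := h0 ▸ hn
    exact lemD hqs (hLM ▸ hN)
  | succ n ih =>
    intro c L M N h0 hn hc hqs hN
    have hc' : ∀ i < n, NormalIn (c i) (c (i + 1)) := fun i hi => hc i (by omega)
    have hHM : NormalIn (c n) M := hn ▸ hc n (by omega)
    have hLH : L ≤ c n := h0 ▸ chain_mono hc' 0 n (by omega) le_rfl
    have hNH : NormalIn (N ⊓ c n) (c n) := by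
      refine ⟨inf_le_right, fun g hg x hx => ?_⟩
      exact Subgroup.mem_inf.mpr ⟨hN.2 g (hHM.1 hg) x (Subgroup.mem_inf.mp hx).1,
        mul_mem (mul_mem hg (Subgroup.mem_inf.mp hx).2) (inv_mem hg)⟩
    rcases ih c L (c n) (N ⊓ c n) h0 rfl hc' hqs hNH with h | h
    · exact Or.inl (h.trans inf_le_left)
    · right
      have hsub : ⁅L, N⁆ ≤ N ⊓ c n := by
        rw [Subgroup.commutator_le]
        intro l hl x hx
        refine Subgroup.mem_inf.mpr ⟨?_, ?_⟩
        · have h1 : l * x * l⁻¹ ∈ N := hN.2 l (hHM.1 (hLH hl)) x hx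
          have he : ⁅l, x⁆ = (l * x * l⁻¹) * x⁻¹ := by
            rw [commutatorElement_def]
          rw [he]; exact mul_mem h1 (inv_mem hx)
        · have h2 : x * l⁻¹ * x⁻¹ ∈ c n := hHM.2 x (hN.1 hx) l⁻¹ (inv_mem (hLH hl))
          have he : ⁅l, x⁆ = l * (x * l⁻¹ * x⁻¹) := by
            rw [commutatorElement_def]; group
          rw [he]; exact mul_mem (hLH hl) h2
      have h1 : ⁅⁅L, N⁆, L⁆ = ⊥ := by
        rw [eq_bot_iff]
        calc ⁅⁅L, N⁆, L⁆ ≤ ⁅N ⊓ c n, L⁆ := Subgroup.commutator_mono hsub le_rfl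
          _ = ⁅L, N ⊓ c n⁆ := Subgroup.commutator_comm _ _
          _ ≤ ⊥ := le_of_eq h
      have h2 : ⁅⁅N, L⁆, L⁆ = ⊥ := by rw [Subgroup.commutator_comm N L]; exact h1
      have h3 := Subgroup.commutator_commutator_eq_bot_of_rotate h1 h2
      have hperf : ⁅L, L⁆ = L := commutator_subgroup_eq_top_iff_self.mp hqs.1
      rwa [hperf] at h3

/-- A perfect subnormal subgroup of a quasisimple group is trivial or everything. -/
theorem lemC : ∀ (m : ℕ) (c : ℕ → Subgroup G) (K L : Subgroup G),
    c 0 = K → c m = L → (∀ i < m, NormalIn (c i) (c (i + 1))) →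
    ⁅K, K⁆ = K →
    (commutator ↥L = ⊤ ∧ IsSimpleGroup (↥L ⧸ Subgroup.center ↥L)) →
    K = ⊥ ∨ K = L := by
  intro m
  induction m with
  | zero =>
    intro c K L h0 hm _ _ _
    exact Or.inr (h0 ▸ hm ▸ rfl)
  | succ m ih =>
    intro c K L h0 hm hc hperf hqs
    have hc' : ∀ i < m, NormalIn (c i) (c (i + 1)) := fun i hi => hc i (by omega)
    have hNL : NormalIn (c m) L := hm ▸ hc m (by omega)
    rcases lemD hqs hNL with h | h
    · exact ih c K L h0 (le_antisymm hNL.1 h) hc' hperf hqs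
    · left
      have hK : K ≤ c m := h0 ▸ chain_mono hc' 0 m (by omega) le_rfl
      have : K ≤ ⊥ := by
        rw [← hperf]
        calc ⁅K, K⁆ ≤ ⁅L, c m⁆ := Subgroup.commutator_mono (hK.trans hNL.1) hK
          _ ≤ ⊥ := le_of_eq h
      exact le_bot_iff.mp this

/-- Distinct quasisimple subgroups, both subnormal in `M`, commute. -/
theorem lemB : ∀ (n : ℕ) (cK : ℕ → Subgroup G) (m : ℕ) (cL : ℕ → Subgroup G)
    (M K L : Subgroup G),
    cK 0 = K → cK n = M → (∀ i < n, NormalIn (cK i) (cK (i + 1))) →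
    cL 0 = L → cL m = M → (∀ i < m, NormalIn (cL i) (cL (i + 1))) →
    (commutator ↥K = ⊤ ∧ IsSimpleGroup (↥K ⧸ Subgroup.center ↥K)) →
    (commutator ↥L = ⊤ ∧ IsSimpleGroup (↥L ⧸ Subgroup.center ↥L)) →
    K ≠ L → ⁅K, L⁆ = ⊥ := by
  intro n
  induction n with
  | zero =>
    intro cK m cL M K L hK0 hKn hcK hL0 hLm hcL hqsK hqsL hne
    have hKM : K = M := hK0 ▸ hKn
    have hLmK : cL m = K := hKM ▸ hLm
    rcases lemC m cL L K hL0 hLmK hcL (commutator_subgroup_eq_top_iff_self.mp hqsL.1) hqsK with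
      h | h
    · exact absurd h (qs_ne_bot hqsL)
    · exact absurd h.symm hne
  | succ n ih =>
    intro cK m cL M K L hK0 hKn hcK hL0 hLm hcL hqsK hqsL hne
    have hcK' : ∀ i < n, NormalIn (cK i) (cK (i + 1)) := fun i hi => hcK i (by omega)
    have hHM : NormalIn (cK n) M := hKn ▸ hcK n (by omega)
    rcases lemA m cL L M (cK n) hL0 hLm hcL hqsL hHM with hLH | h
    · -- recurse into cK n
      refine ih cK m (fun i => cL i ⊓ cK n) (cK n) K L hK0 rfl hcK' ?_ ?_ ?_ hqsK hqsL hne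
      · show cL 0 ⊓ cK n = L
        rw [hL0]; exact inf_eq_left.mpr hLH
      · show cL m ⊓ cK n = cK n
        rw [hLm]; exact inf_eq_right.mpr hHM.1
      · intro i hi
        refine ⟨inf_le_inf_right _ (hcL i hi).1, fun g hg x hx => ?_⟩
        obtain ⟨hg1, hg2⟩ := Subgroup.mem_inf.mp hg
        obtain ⟨hx1, hx2⟩ := Subgroup.mem_inf.mp hx
        exact Subgroup.mem_inf.mpr ⟨(hcL i hi).2 g hg1 x hx1,
          mul_mem (mul_mem hg2 hx2) (inv_mem hg2)⟩
    · have hKH : K ≤ cK n := hK0 ▸ chain_mono hcK' 0 n (by omega) le_rfl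
      rw [eq_bot_iff]
      calc ⁅K, L⁆ ≤ ⁅cK n, L⁆ := Subgroup.commutator_mono hKH le_rfl
        _ = ⁅L, cK n⁆ := Subgroup.commutator_comm _ _
        _ ≤ ⊥ := le_of_eq h

end AuxComponent


section AuxSolvable

variable {G : Type*} [Group G]


theorem solvable_of_mulEquiv {A B : Type*} [Group A] [Group B] (e : A ≃* B)
    (h : Group.IsSolvable A) : IsSolvable B := by
  haveI : Group.IsSolvable A := h
  exact solvable_of_surjective (f := e.toMonoidHom) (fun b => ⟨e.symm b, by simp⟩)

theorem perfect_hom_solvable_trivial {Q H' : Type*} [Group Q] [Group H'] [hs : Group.IsSolvable H']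
    (f : Q →* H') (hQ : commutator Q = ⊤) : ∀ x, f x = 1 := by
  obtain ⟨n, hn⟩ := hs.solvable
  have htop : ∀ k, derivedSeries Q k = ⊤ := by
    intro k
    induction k with
    | zero => rfl
    | succ k ih => rw [derivedSeries_succ, ih, ← commutator_def]; exact hQ
  intro x
  have hle : (⊤ : Subgroup Q).map f ≤ ⊥ := by
    rw [← htop n, ← hn]
    exact map_derivedSeries_le_derivedSeries f n
  have : f x ∈ (⊥ : Subgroup H') := hle ⟨x, trivial, rfl⟩
  simpa using this

theorem lemU_step {S C X₁ X₂ P : Subgroup G} (hSsolv : IsSolvable ↥S) (hSn : S.Normal)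
    (hX : NormalIn X₁ X₂) (hCX : C ≤ X₁) (hX₂ : X₂ ≤ C ⊔ S)
    (hP : ⁅P, P⁆ = P) (hPX : P ≤ X₂) : P ≤ X₁ := by
  haveI : Group.IsSolvable ↥S := hSsolv
  haveI := hSn
  haveI hnormal : (X₁.subgroupOf X₂).Normal := subgroupOf_normal_of_normalIn hX
  haveI : Group.IsSolvable (↥X₂ ⧸ X₁.subgroupOf X₂) := by
    haveI : Group.IsSolvable ↥(S ⊓ X₂ : Subgroup G) :=
      solvable_of_solvable_injective (Subgroup.inclusion_injective (inf_le_left : S ⊓ X₂ ≤ S))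
    have hsurj : Function.Surjective ((QuotientGroup.mk' (X₁.subgroupOf X₂)).comp
        (Subgroup.inclusion (inf_le_right : S ⊓ X₂ ≤ X₂))) := by
      intro q
      obtain ⟨x, rfl⟩ := QuotientGroup.mk'_surjective _ q
      have hx : (x : G) ∈ (↑(C ⊔ S) : Set G) := hX₂ x.2
      rw [Subgroup.mul_normal C S] at hx
      obtain ⟨c, hc, s, hs, hcs⟩ := hx
      have hsX₂ : s ∈ X₂ := by
        have hseq : s = c⁻¹ * (x : G) := by rw [← hcs]; group
        rw [hseq]
        exact mul_mem (inv_mem (hX.1 (hCX hc))) x.2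
      refine ⟨⟨s, Subgroup.mem_inf.mpr ⟨hs, hsX₂⟩⟩, ?_⟩
      show _ = QuotientGroup.mk' (X₁.subgroupOf X₂) x
      apply (QuotientGroup.eq (s := X₁.subgroupOf X₂)).mpr
      show ((Subgroup.inclusion _ ⟨s, _⟩ : ↥X₂) : G)⁻¹ * (x : G) ∈ X₁
      show s⁻¹ * (x : G) ∈ X₁
      have : s⁻¹ * (x : G) = s⁻¹ * c * (s⁻¹)⁻¹ := by rw [← hcs]; group
      rw [this]
      exact hX.2 s⁻¹ (inv_mem hsX₂) c (hCX hc)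
    exact solvable_of_surjective hsurj
  intro p hp
  have hfp := perfect_hom_solvable_trivial ((QuotientGroup.mk' (X₁.subgroupOf X₂)).comp
    (Subgroup.inclusion hPX)) (commutator_subgroup_eq_top_iff_self.mpr hP) ⟨p, hp⟩
  have hker : Subgroup.inclusion hPX ⟨p, hp⟩ ∈ X₁.subgroupOf X₂ := by
    rw [← QuotientGroup.ker_mk' (X₁.subgroupOf X₂)]
    exact hfp
  exact hker

theorem lemU {S C P : Subgroup G} (hSsolv : IsSolvable ↥S) (hSn : S.Normal)
    (n : ℕ) (c : ℕ → Subgroup G) (h0 : c 0 = C) (hn : c n = ⊤)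
    (hc : ∀ i < n, NormalIn (c i) (c (i + 1)))
    (hP : ⁅P, P⁆ = P) (hPC : P ≤ C ⊔ S) : P ≤ C := by
  have key : ∀ j, j ≤ n → P ≤ c (n - j) ⊓ (C ⊔ S) := by
    intro j
    induction j with
    | zero => intro _; rw [Nat.sub_zero, hn]; exact le_inf le_top hPC
    | succ j ih =>
      intro hj
      have ihj := ih (by omega)
      have hi : n - (j + 1) + 1 = n - j := by omega
      have hilt : n - (j + 1) < n := by omega
      refine le_inf ?_ hPC
      have hstep : P ≤ c (n - (j + 1)) ⊓ (C ⊔ S) := by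
        refine lemU_step hSsolv hSn (X₁ := c (n - (j + 1)) ⊓ (C ⊔ S))
          (X₂ := c (n - (j + 1) + 1) ⊓ (C ⊔ S)) ?_ ?_ inf_le_right hP ?_
        · refine ⟨inf_le_inf_right _ (hc _ hilt).1, fun g hg x hx => ?_⟩
          obtain ⟨hg1, hg2⟩ := Subgroup.mem_inf.mp hg
          obtain ⟨hx1, hx2⟩ := Subgroup.mem_inf.mp hx
          exact Subgroup.mem_inf.mpr ⟨(hc _ hilt).2 g hg1 x hx1,
            mul_mem (mul_mem hg2 hx2) (inv_mem hg2)⟩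
        · exact le_inf (h0 ▸ chain_mono hc 0 (n - (j + 1)) (by omega) (by omega)) le_sup_left
        · rw [hi]; exact ihj
      exact hstep.trans inf_le_left
  have := key n le_rfl
  rw [Nat.sub_self, h0] at this
  exact this.trans inf_le_left

theorem isSolvable_solRadical (G : Type*) [Group G] [Finite G] :
    IsSolvable ↥(solRadical G) := by
  haveI : Finite (Subgroup G) :=
    Finite.of_injective (fun H : Subgroup G => (H : Set G)) SetLike.coe_injective
  have hsup : ∀ N₁ : Subgroup G, (N₁.Normal ∧ IsSolvable ↥N₁) → ∀ N₂ : Subgroup G,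
      (N₂.Normal ∧ IsSolvable ↥N₂) → ((N₁ ⊔ N₂).Normal ∧ IsSolvable ↥(N₁ ⊔ N₂)) := by
    intro N₁ ⟨h1n, h1s⟩ N₂ ⟨h2n, h2s⟩
    haveI := h1n; haveI := h2n; haveI : Group.IsSolvable ↥N₁ := h1s; haveI : Group.IsSolvable ↥N₂ := h2s
    refine ⟨Subgroup.sup_normal N₁ N₂, ?_⟩
    rw [sup_comm]
    haveI : (N₁.subgroupOf (N₂ ⊔ N₁)).Normal := h1n.subgroupOf _
    haveI : (N₁.subgroupOf N₂).Normal := h1n.subgroupOf _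
    have e := QuotientGroup.quotientInfEquivProdNormalQuotient N₂ N₁
    haveI : Group.IsSolvable (↥(N₂ ⊔ N₁) ⧸ N₁.subgroupOf (N₂ ⊔ N₁)) :=
      solvable_of_mulEquiv e inferInstance
    haveI : Group.IsSolvable ↥(N₁.subgroupOf (N₂ ⊔ N₁)) :=
      solvable_of_mulEquiv (Subgroup.subgroupOfEquivOfLe
        (le_sup_right : N₁ ≤ N₂ ⊔ N₁)).symm inferInstance
    exact solvable_of_ker_le_range (N₁.subgroupOf (N₂ ⊔ N₁)).subtype
      (QuotientGroup.mk' (N₁.subgroupOf (N₂ ⊔ N₁)))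
      (by rw [QuotientGroup.ker_mk', Subgroup.range_subtype])
  have hbot : ((⊥ : Subgroup G).Normal ∧ IsSolvable ↥(⊥ : Subgroup G)) := by
    haveI : Subsingleton ↥(⊥ : Subgroup G) :=
      ⟨fun a b => Subtype.ext (by simp [Subgroup.mem_bot.mp a.2, Subgroup.mem_bot.mp b.2])⟩
    exact ⟨inferInstance, inferInstanceAs (Group.IsSolvable _)⟩
  have hfin : ({N : Subgroup G | N.Normal ∧ IsSolvable ↥N}).Finite := Set.toFinite _
  have heq : solRadical G = hfin.toFinset.sup id := by
    rw [Finset.sup_id_eq_sSup, Set.Finite.coe_toFinset]; rfl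
  have hmem : (hfin.toFinset.sup id).Normal ∧ IsSolvable ↥(hfin.toFinset.sup id) :=
    Finset.sup_induction (p := fun H : Subgroup G => H.Normal ∧ IsSolvable ↥H) hbot hsup
      (fun N hN => (Set.Finite.mem_toFinset hfin).mp hN)
  exact heq ▸ hmem.2

theorem map_solRadical_le (G : Type*) [Group G] (e : G ≃* G) :
    (solRadical G).map e.toMonoidHom ≤ solRadical G := by
  rw [Subgroup.map_le_iff_le_comap]
  refine sSup_le fun N hN => ?_
  rw [← Subgroup.map_le_iff_le_comap]
  refine le_sSup ⟨hN.1.map e.toMonoidHom e.surjective, ?_⟩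
  exact solvable_of_mulEquiv (Subgroup.equivMapOfInjective N e.toMonoidHom e.injective) hN.2

theorem map_solRadical (G : Type*) [Group G] (e : G ≃* G) :
    (solRadical G).map e.toMonoidHom = solRadical G := by
  refine le_antisymm (map_solRadical_le G e) ?_
  intro x hx
  exact ⟨e.symm x, map_solRadical_le G e.symm ⟨x, hx, rfl⟩, by simp⟩

theorem smul_eq_map_mulAut (η : MulAut G) (H : Subgroup G) :
    η • H = H.map η.toMonoidHom := by
  ext x
  rw [Subgroup.mem_smul_pointwise_iff_exists, Subgroup.mem_map]
  simp only [MulAut.smul_def]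
  rfl

theorem smul_iSup_mulAut {ι : Sort*} (η : MulAut G) (s : ι → Subgroup G) :
    η • (⨆ i, s i) = ⨆ i, η • s i := by
  simp only [smul_eq_map_mulAut]
  exact Subgroup.map_iSup η.toMonoidHom s

theorem normalIn_map {G₂ : Type*} [Group G₂] (f : G →* G₂) {N M : Subgroup G}
    (h : NormalIn N M) : NormalIn (N.map f) (M.map f) := by
  refine ⟨Subgroup.map_mono h.1, ?_⟩
  rintro _ ⟨g, hg, rfl⟩ _ ⟨x, hx, rfl⟩
  exact ⟨g * x * g⁻¹, h.2 g hg x hx, by simp⟩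

theorem isQuasisimpleGroup_congr {Q Q' : Type*} [Group Q] [Group Q'] (e : Q ≃* Q')
    (h : IsQuasisimpleGroup Q) : IsQuasisimpleGroup Q' := by
  obtain ⟨hperf, hsimp⟩ := h
  have hcenter : (Subgroup.center Q).map e.toMonoidHom = Subgroup.center Q' := by
    ext x
    constructor
    · rintro ⟨z, hz, rfl⟩
      rw [Subgroup.mem_center_iff]
      intro g
      have h1 := Subgroup.mem_center_iff.mp hz (e.symm g)
      calc g * e z = e (e.symm g) * e z := by simp
        _ = e (e.symm g * z) := by rw [map_mul]
        _ = e (z * e.symm g) := by rw [h1]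
        _ = e z * e (e.symm g) := by rw [map_mul]
        _ = e z * g := by simp
    · intro hx
      refine ⟨e.symm x, ?_, by simp⟩
      show e.symm x ∈ Subgroup.center Q
      rw [Subgroup.mem_center_iff]
      intro g
      apply e.injective
      rw [map_mul, map_mul]
      simp only [MulEquiv.apply_symm_apply]
      exact Subgroup.mem_center_iff.mp hx (e g)
  constructor
  · have hmc : (commutator Q).map e.toMonoidHom = commutator Q' := by
      rw [commutator_def, commutator_def, Subgroup.map_commutator,
        Subgroup.map_top_of_surjective _ e.surjective]
    rw [← hmc, hperf, Subgroup.map_top_of_surjective _ e.surjective]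
  · have e2 : (Q ⧸ Subgroup.center Q) ≃* (Q' ⧸ Subgroup.center Q') :=
      QuotientGroup.congr _ _ e hcenter
    haveI := hsimp
    haveI : Nontrivial (Q' ⧸ Subgroup.center Q') := by
      obtain ⟨x, y, hxy⟩ := exists_pair_ne (Q ⧸ Subgroup.center Q)
      exact ⟨e2 x, e2 y, fun hcon => hxy (e2.injective hcon)⟩
    exact IsSimpleGroup.isSimpleGroup_of_surjective e2.toMonoidHom e2.surjective

theorem le_map_solRadical_subtype {G : Type*} [Group G] {S M X : Subgroup G}
    (hSn : S.Normal) (hsolv : IsSolvable ↥S) (hXM : X ≤ M) (hXS : X ≤ S) :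
    X ≤ (solRadical ↥M).map M.subtype := by
  haveI : Group.IsSolvable ↥S := hsolv
  have hmem : ((S ⊓ M).subgroupOf M) ∈
      {N : Subgroup ↥M | N.Normal ∧ IsSolvable ↥N} := by
    constructor
    · constructor
      rintro ⟨x, hxM⟩ hx ⟨g, hgM⟩
      simp only [Subgroup.mem_subgroupOf] at hx ⊢
      obtain ⟨hx1, hx2⟩ := Subgroup.mem_inf.mp hx
      exact Subgroup.mem_inf.mpr ⟨hSn.conj_mem _ hx1 g,
        mul_mem (mul_mem hgM hx2) (inv_mem hgM)⟩
    · haveI : Group.IsSolvable ↥(S ⊓ M : Subgroup G) :=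
        solvable_of_solvable_injective (Subgroup.inclusion_injective (inf_le_left : S ⊓ M ≤ S))
      exact solvable_of_mulEquiv
        (Subgroup.subgroupOfEquivOfLe (inf_le_right : S ⊓ M ≤ M)).symm inferInstance
  have hle : (S ⊓ M).subgroupOf M ≤ solRadical ↥M := le_sSup hmem
  intro x hx
  refine ⟨⟨x, hXM hx⟩, hle ?_, rfl⟩
  simp only [Subgroup.mem_subgroupOf]
  exact Subgroup.mem_inf.mpr ⟨hXS hx, hXM hx⟩

end AuxSolvable


/-- Distinct `(A,sol)`-components `K`, `L` of `G` (subgroups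
generated by `A`-orbits of sol-components of `G`) normalize each other and
`[K,L] ≤ Sol(K) ∩ Sol(L)`. -/
theorem distinct_aSolComponents_normalize_and_commutator_le_solRadicals
    {A G : Type*} [Group A] [Group G] [Finite G] (φ : A →* MulAut G) (K L : Subgroup G)
    (hK : ∃ C : Subgroup G, IsSolComponent C ∧ K = ⨆ a : A, φ a • C)
    (hL : ∃ C : Subgroup G, IsSolComponent C ∧ L = ⨆ a : A, φ a • C)
    (hne : K ≠ L) :
    K ≤ Subgroup.normalizer (L : Set G) ∧ L ≤ Subgroup.normalizer (K : Set G) ∧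
      ⁅K, L⁆ ≤ (solRadical ↥K).map K.subtype ⊓ (solRadical ↥L).map L.subtype := by
  obtain ⟨C, hC, rfl⟩ := hK
  obtain ⟨D, hD, rfl⟩ := hL
  have hSsolv : IsSolvable ↥(solRadical G) := isSolvable_solRadical G
  have hSn : (solRadical G).Normal := solRadical_normal G
  -- perfectness of translates of sol-components
  have perfTrans : ∀ (E : Subgroup G), IsSolComponent E → ∀ η : MulAut G,
      ⁅η • E, η • E⁆ = η • E := by
    intro E hE η
    have hperf : ⁅E, E⁆ = E := commutator_subgroup_eq_top_iff_self.mp hE.2.1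
    rw [smul_eq_map_mulAut, ← Subgroup.map_commutator, hperf]
  -- subnormal chains for translates of sol-components
  have chainTrans : ∀ (E : Subgroup G), IsSolComponent E → ∀ η : MulAut G,
      ∃ (n : ℕ) (c : ℕ → Subgroup G), c 0 = η • E ∧ c n = ⊤ ∧ ∀ i < n, NormalIn (c i) (c (i + 1)) := by
    intro E hE η
    obtain ⟨n, c, h0, hn, hc⟩ := hE.1
    refine ⟨n, fun i => (c i).map η.toMonoidHom, ?_, ?_, ?_⟩
    · show (c 0).map η.toMonoidHom = η • E
      rw [h0, smul_eq_map_mulAut]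
    · show (c n).map η.toMonoidHom = ⊤
      rw [hn, Subgroup.map_top_of_surjective _ η.surjective]
    · intro i hi
      exact normalIn_map _ (normalIn_of_subgroupOf (hc i hi).1 (hc i hi).2)
  -- quasisimplicity of images of translates in the quotient
  have qsImg : ∀ (E : Subgroup G), IsSolComponent E → ∀ η : MulAut G,
      IsQuasisimpleGroup ↥((η • E).map (QuotientGroup.mk' (solRadical G))) := by
    intro E hE η
    have hη : (solRadical G).map (η : G →* G) = solRadical G := map_solRadical G η
    set ψ := QuotientGroup.congr (solRadical G) (solRadical G) η hη with hψ
    have heq2 : (η • E).map (QuotientGroup.mk' (solRadical G)) =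
        (E.map (QuotientGroup.mk' (solRadical G))).map ψ.toMonoidHom := by
      rw [smul_eq_map_mulAut, Subgroup.map_map, Subgroup.map_map]
      have hch : (QuotientGroup.mk' (solRadical G)).comp η.toMonoidHom =
          ψ.toMonoidHom.comp (QuotientGroup.mk' (solRadical G)) := by
        apply MonoidHom.ext; intro x; rfl
      rw [hch]
    rw [heq2]
    exact isQuasisimpleGroup_congr
      (Subgroup.equivMapOfInjective _ ψ.toMonoidHom ψ.injective) hE.2.2.2
  -- chains for the images in the quotient
  have chainImg : ∀ (E : Subgroup G), IsSolComponent E → ∀ η : MulAut G,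
      ∃ (n : ℕ) (c : ℕ → Subgroup (G ⧸ solRadical G)), c 0 = (η • E).map (QuotientGroup.mk' (solRadical G)) ∧ c n = ⊤ ∧
        ∀ i < n, NormalIn (c i) (c (i + 1)) := by
    intro E hE η
    obtain ⟨n, c, h0, hn, hc⟩ := chainTrans E hE η
    refine ⟨n, fun i => (c i).map (QuotientGroup.mk' (solRadical G)),
      (by rw [h0] : (c 0).map (QuotientGroup.mk' (solRadical G)) = _), ?_,
      fun i hi => normalIn_map _ (hc i hi)⟩
    show (c n).map (QuotientGroup.mk' (solRadical G)) = ⊤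
    rw [hn, Subgroup.map_top_of_surjective _ (QuotientGroup.mk'_surjective _)]
  -- uniqueness below (translate) ⊔ Sol(G)
  have uniq : ∀ (E : Subgroup G), IsSolComponent E → ∀ η : MulAut G, ∀ P : Subgroup G,
      ⁅P, P⁆ = P → P ≤ (η • E) ⊔ solRadical G → P ≤ η • E := by
    intro E hE η P hP hle
    obtain ⟨n, c, h0, hn, hc⟩ := chainTrans E hE η
    exact lemU hSsolv hSn n c h0 hn hc hP hle
  -- inclusions of images lift to inclusions modulo Sol(G)
  have leSup : ∀ (X Y : Subgroup G),
      X.map (QuotientGroup.mk' (solRadical G)) ≤ Y.map (QuotientGroup.mk' (solRadical G)) →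
      X ≤ Y ⊔ solRadical G := by
    intro X Y hmap x hx
    obtain ⟨d, hd, hdx⟩ := hmap ⟨x, hx, rfl⟩
    have hs : d⁻¹ * x ∈ solRadical G := by
      rw [← QuotientGroup.ker_mk' (solRadical G), MonoidHom.mem_ker, map_mul, map_inv, hdx]
      simp
    have hxe : x = d * (d⁻¹ * x) := by group
    rw [hxe]
    exact Subgroup.mul_mem_sup hd hs
  -- images of the two orbits are pairwise distinct
  have imgNe : ∀ a b : A,
      ((φ a • C).map (QuotientGroup.mk' (solRadical G))) ≠
      ((φ b • D).map (QuotientGroup.mk' (solRadical G))) := by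
    intro a b heq
    apply hne
    have hCD : φ a • C = φ b • D := by
      apply le_antisymm
      · exact uniq D hD (φ b) _ (perfTrans C hC (φ a)) (leSup _ _ (le_of_eq heq))
      · exact uniq C hC (φ a) _ (perfTrans D hD (φ b)) (leSup _ _ (le_of_eq heq.symm))
    apply le_antisymm
    · apply iSup_le; intro x
      have hx : φ x • C = φ (x * a⁻¹ * b) • D := by
        rw [map_mul, map_mul, map_inv, mul_smul, mul_smul, ← hCD, inv_smul_smul]
      rw [hx]
      exact le_iSup (fun y : A => φ y • D) (x * a⁻¹ * b)
    · apply iSup_le; intro y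
      have hy : φ y • D = φ (y * b⁻¹ * a) • C := by
        rw [map_mul, map_mul, map_inv, mul_smul, mul_smul, hCD, inv_smul_smul]
      rw [hy]
      exact le_iSup (fun z : A => φ z • C) (y * b⁻¹ * a)
  -- the image components commute
  have hcommQ : ∀ a b : A, ⁅(φ a • C).map (QuotientGroup.mk' (solRadical G)),
      (φ b • D).map (QuotientGroup.mk' (solRadical G))⁆ = ⊥ := by
    intro a b
    obtain ⟨n, cK, h0K, hnK, hcK⟩ := chainImg C hC (φ a)
    obtain ⟨m, cL, h0L, hnL, hcL⟩ := chainImg D hD (φ b)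
    exact lemB n cK m cL ⊤ _ _ h0K hnK hcK h0L hnL hcL (qsImg C hC (φ a)) (qsImg D hD (φ b))
      (imgNe a b)
  have hKcent : ∀ b : A, ((⨆ a : A, φ a • C).map (QuotientGroup.mk' (solRadical G))) ≤
      Subgroup.centralizer ((φ b • D).map (QuotientGroup.mk' (solRadical G))) := by
    intro b
    rw [Subgroup.map_iSup]
    exact iSup_le fun a => Subgroup.commutator_eq_bot_iff_le_centralizer.mp (hcommQ a b)
  have hLcent : ∀ a : A, ((⨆ b : A, φ b • D).map (QuotientGroup.mk' (solRadical G))) ≤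
      Subgroup.centralizer ((φ a • C).map (QuotientGroup.mk' (solRadical G))) := by
    intro a
    rw [Subgroup.map_iSup]
    refine iSup_le fun b => Subgroup.commutator_eq_bot_iff_le_centralizer.mp ?_
    rw [Subgroup.commutator_comm]
    exact hcommQ a b
  -- conjugation stability of translates
  have conjStab : ∀ (E : Subgroup G), IsSolComponent E → ∀ (η : MulAut G), ∀ x : G,
      ((QuotientGroup.mk' (solRadical G)) x) ∈
        Subgroup.centralizer ((η • E).map (QuotientGroup.mk' (solRadical G))) →
      MulAut.conj x • (η • E) = η • E := by
    intro E hE η x hcent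
    have hPperf : ⁅MulAut.conj x • (η • E), MulAut.conj x • (η • E)⁆ =
        MulAut.conj x • (η • E) := by
      rw [smul_eq_map_mulAut (MulAut.conj x), ← Subgroup.map_commutator, perfTrans E hE η]
    have hPle : MulAut.conj x • (η • E) ≤ (η • E) ⊔ solRadical G := by
      intro y hy
      obtain ⟨d, hd, rfl⟩ := (Subgroup.mem_smul_pointwise_iff_exists _ _ _).mp hy
      have hyd : MulAut.conj x • d = x * d * x⁻¹ := by
        rw [MulAut.smul_def, MulAut.conj_apply]
      rw [hyd]
      have hcd := Subgroup.mem_centralizer_iff.mp hcent _ ⟨d, hd, rfl⟩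
      have hπ : (QuotientGroup.mk' (solRadical G)) (x * d * x⁻¹) =
          (QuotientGroup.mk' (solRadical G)) d := by
        rw [map_mul, map_mul, map_inv, ← hcd]
        group
      have hs : d⁻¹ * (x * d * x⁻¹) ∈ solRadical G := by
        rw [← QuotientGroup.ker_mk' (solRadical G), MonoidHom.mem_ker, map_mul, map_inv, hπ]
        simp
      have hde : x * d * x⁻¹ = d * (d⁻¹ * (x * d * x⁻¹)) := by group
      rw [hde]
      exact Subgroup.mul_mem_sup hd hs
    have hle := uniq E hE η _ hPperf hPle
    refine Subgroup.eq_of_le_of_card_ge hle ?_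
    exact le_of_eq (Nat.card_congr (Subgroup.equivSMul (MulAut.conj x) (η • E)).toEquiv)
  -- conjugation stability of the two orbit subgroups
  have hLfix : ∀ x ∈ (⨆ a : A, φ a • C),
      MulAut.conj x • (⨆ b : A, φ b • D) = ⨆ b : A, φ b • D := by
    intro x hx
    rw [smul_iSup_mulAut]
    exact iSup_congr fun b => conjStab D hD (φ b) x (hKcent b ⟨x, hx, rfl⟩)
  have hKfix : ∀ y ∈ (⨆ b : A, φ b • D),
      MulAut.conj y • (⨆ a : A, φ a • C) = ⨆ a : A, φ a • C := by
    intro y hy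
    rw [smul_iSup_mulAut]
    exact iSup_congr fun a => conjStab C hC (φ a) y (hLcent a ⟨y, hy, rfl⟩)
  -- normalizing
  have normOf : ∀ (X Y : Subgroup G), (∀ x ∈ X, MulAut.conj x • Y = Y) → X ≤ Subgroup.normalizer (Y : Set G) := by
    intro X Y hfix x hx
    rw [Subgroup.mem_normalizer_iff]
    intro y
    constructor
    · intro hy
      have h1 := Subgroup.smul_mem_pointwise_smul y (MulAut.conj x) Y hy
      rw [hfix x hx] at h1
      have h2 : MulAut.conj x • y = x * y * x⁻¹ := by rw [MulAut.smul_def, MulAut.conj_apply]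
      rwa [h2] at h1
    · intro hy
      have h1 := Subgroup.smul_mem_pointwise_smul _ (MulAut.conj x⁻¹) Y hy
      rw [hfix x⁻¹ (inv_mem hx)] at h1
      have h2 : MulAut.conj x⁻¹ • (x * y * x⁻¹) = y := by
        rw [MulAut.smul_def, MulAut.conj_apply]
        group
      rwa [h2] at h1
  -- commutator is contained in Sol(G)
  have hKLS : ⁅⨆ a : A, φ a • C, ⨆ b : A, φ b • D⁆ ≤ solRadical G := by
    rw [← QuotientGroup.ker_mk' (solRadical G), ← Subgroup.map_eq_bot_iff,
      Subgroup.map_commutator, Subgroup.commutator_eq_bot_iff_le_centralizer,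
      Subgroup.map_iSup]
    refine iSup_le fun a => Subgroup.commutator_eq_bot_iff_le_centralizer.mp ?_
    rw [Subgroup.commutator_comm]
    rw [Subgroup.commutator_eq_bot_iff_le_centralizer]
    exact hLcent a
  -- commutator is contained in K and in L
  have hKLK : ⁅⨆ a : A, φ a • C, ⨆ b : A, φ b • D⁆ ≤ ⨆ a : A, φ a • C := by
    rw [Subgroup.commutator_le]
    intro k hk l hl
    have h1 : l * k⁻¹ * l⁻¹ ∈ ⨆ a : A, φ a • C := by
      have h2 := Subgroup.smul_mem_pointwise_smul k⁻¹ (MulAut.conj l) _ (inv_mem hk)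
      rw [hKfix l hl] at h2
      have h3 : MulAut.conj l • k⁻¹ = l * k⁻¹ * l⁻¹ := by rw [MulAut.smul_def, MulAut.conj_apply]
      rwa [h3] at h2
    have he : ⁅k, l⁆ = k * (l * k⁻¹ * l⁻¹) := by rw [commutatorElement_def]; group
    rw [he]
    exact mul_mem hk h1
  have hKLL : ⁅⨆ a : A, φ a • C, ⨆ b : A, φ b • D⁆ ≤ ⨆ b : A, φ b • D := by
    rw [Subgroup.commutator_le]
    intro k hk l hl
    have h1 : k * l * k⁻¹ ∈ ⨆ b : A, φ b • D := by
      have h2 := Subgroup.smul_mem_pointwise_smul l (MulAut.conj k) _ hl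
      rw [hLfix k hk] at h2
      have h3 : MulAut.conj k • l = k * l * k⁻¹ := by rw [MulAut.smul_def, MulAut.conj_apply]
      rwa [h3] at h2
    have he : ⁅k, l⁆ = (k * l * k⁻¹) * l⁻¹ := by rw [commutatorElement_def]
    rw [he]
    exact mul_mem h1 (inv_mem hl)
  exact ⟨normOf _ _ hLfix, normOf _ _ hKfix,
    le_inf (le_map_solRadical_subtype hSn hSsolv hKLK hKLS)
      (le_map_solRadical_subtype hSn hSsolv hKLL hKLS)⟩
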